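/- arXiv:2005.10788 — 5 statements merged into one kernel-verified Lean document; each statement's English description precedes it below -/
import Mathlib

section
/- If F: 𝔽₂ⁿ → 𝔽₂ⁿ is a quadratic APN function and a ∈ 𝔽₂ⁿ is nonzero, then the set B_a(F) = {F(x) + F(x+a) : x ∈ 𝔽₂ⁿ} is either an affine subspace of 𝔽₂ⁿ of dimension n−1, i.e., B_a(F) = {y : u·y = ε} for some nonzero u ∈ 𝔽₂ⁿ and ε ∈ 𝔽₂. -/
open Finset

abbrev V (n : ℕ) : Type := Fin n → ZMod 2

def dotp {n : ℕ} (u y : V n) : ZMod 2 := ∑ i, u i * y i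

def IsAPN {n : ℕ} (F : V n → V n) : Prop :=
  ∀ a : V n, a ≠ 0 → ∀ b : V n,
    (Finset.univ.filter (fun x => F x + F (x + a) = b)).card ≤ 2

/-- `F` has algebraic degree exactly 2: all second derivatives vanish
(degree ≤ 2) and some first derivative is non-constant (degree ≥ 2). -/
def IsQuadratic {n : ℕ} (F : V n → V n) : Prop :=
  (∀ x y a : V n,
    F (x + y + a) + F (x + y) + F (x + a) + F x
      + F (y + a) + F y + F a + F 0 = 0) ∧
  (∃ x a : V n, F (x + a) + F x + F a + F 0 ≠ 0)

/-- `Φ` and `φ` describe the sets `B_a(F)` as affine hyperplanes. -/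
def PhiSpec {n : ℕ} (F Φ : V n → V n) (φ : V n → ZMod 2) : Prop :=
  Φ 0 = 0 ∧ φ 0 = 1 ∧
  ∀ a : V n, a ≠ 0 → Φ a ≠ 0 ∧
    {y : V n | ∃ x, F x + F (x + a) = y} = {y : V n | dotp (Φ a) y = φ a}

def wt {n : ℕ} (a : V n) : ℕ := (Finset.univ.filter (fun i => a i = 1)).card

/-- ANF coefficient of `f` at the monomial with support `a` (Möbius inversion). -/
def anfCoeff {n : ℕ} (f : V n → ZMod 2) (a : V n) : ZMod 2 :=
  ∑ x ∈ Finset.univ.filter (fun x : V n => ∀ i, x i = 1 → a i = 1), f x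

/-- Algebraic degree of a Boolean function. -/
def degB {n : ℕ} (f : V n → ZMod 2) : ℕ :=
  Finset.sup (Finset.univ.filter (fun a : V n => anfCoeff f a ≠ 0)) wt

/-- The monomial with support `a`, evaluated at `x`. -/
def mono {n : ℕ} (a x : V n) : ZMod 2 :=
  ∏ i ∈ Finset.univ.filter (fun i => a i = 1), x i

def walsh {n : ℕ} (f : V n → ZMod 2) (u : V n) : ℤ :=
  ∑ x : V n, (-1 : ℤ) ^ ((f x + dotp u x).val)

/-- The associated function `γ_G(a,b) = 1` as a proposition. -/
def gammaP {n : ℕ} (G : V n → V n) (a b : V n) : Prop :=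
  a ≠ 0 ∧ ∃ x, G x + G (x + a) = b

lemma zmod2_add_self (x : ZMod 2) : x + x = 0 := by revert x; decide

lemma zmod2_eq_of_add (x y : ZMod 2) (h : x + y = 0) : x = y := by revert h; revert x y; decide

lemma Vadd_self {n : ℕ} (v : V n) : v + v = 0 := by
  funext i; exact zmod2_add_self (v i)

lemma eq_iff_add {n : ℕ} (p q : V n) : p = q ↔ p + q = 0 := by
  constructor
  · rintro rfl; exact Vadd_self p
  · intro h
    have := congrArg (· + q) h
    simpa [add_assoc, Vadd_self] using this

theorem stmt0 {n : ℕ} (F : V n → V n) (hq : IsQuadratic F) (hAPN : IsAPN F)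
    (a : V n) (ha : a ≠ 0) :
    ∃ u : V n, u ≠ 0 ∧ ∃ ε : ZMod 2,
      {y : V n | ∃ x, F x + F (x + a) = y} = {y : V n | dotp u y = ε} := by
  classical
  set c : V n := F 0 + F a with hc
  have key : ∀ x y : V n,
      F (x + y) + F (x + y + a) + c =
        (F x + F (x + a) + c) + (F y + F (y + a) + c) := by
    intro x y
    have h := hq.1 x y a
    rw [eq_iff_add, hc]
    calc _ = (F (x + y + a) + F (x + y) + F (x + a) + F x
        + F (y + a) + F y + F a + F 0) + ((F 0 + F 0) + (F a + F a)) := by abel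
     _ = 0 := by rw [h, Vadd_self, Vadd_self]; abel
  have hzero : F 0 + F (0 + a) + c = 0 := by
    rw [hc, zero_add]
    exact Vadd_self _
  let L0 : V n →+ V n :=
    { toFun := fun x => F x + F (x + a) + c
      map_zero' := hzero
      map_add' := key }
  let L : V n →ₗ[ZMod 2] V n := L0.toZModLinearMap 2
  have hLx : ∀ x, L x = F x + F (x + a) + c := fun _ => rfl
  set p : Submodule (ZMod 2) (V n) := LinearMap.range L with hp
  -- the fiber over c
  set T : Finset (V n) := Finset.univ.filter (fun x => F x + F (x + a) = c) with hT
  have hmemT : ∀ x, x ∈ T ↔ F x + F (x + a) = c := by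
    intro x; simp [hT]
  have h0T : (0 : V n) ∈ T := by rw [hmemT, zero_add]
  have haT : a ∈ T := by
    rw [hmemT, Vadd_self, hc]
    abel
  have hTcard : T.card ≤ 2 := hAPN a ha c
  have hpair : ({0, a} : Finset (V n)) ⊆ T := by
    intro x hx
    rcases Finset.mem_insert.mp hx with rfl | hx
    · exact h0T
    · rw [Finset.mem_singleton.mp hx]; exact haT
  have hpaircard : ({0, a} : Finset (V n)).card = 2 := by
    rw [Finset.card_insert_of_notMem (by simpa using (Ne.symm ha)), Finset.card_singleton]
  have hTeq : T = ({0, a} : Finset (V n)) :=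
    (Finset.eq_of_subset_of_card_le hpair (by rw [hpaircard]; exact hTcard)).symm
  -- kernel of L
  have hker : LinearMap.ker L = Submodule.span (ZMod 2) {a} := by
    apply le_antisymm
    · intro x hx
      have hx' : L x = 0 := hx
      have : F x + F (x + a) = c := by
        rw [eq_iff_add]
        rw [hLx] at hx'
        exact hx'
      have hxT : x ∈ T := (hmemT x).mpr this
      rw [hTeq] at hxT
      rcases Finset.mem_insert.mp hxT with rfl | hx2
      · exact Submodule.zero_mem _
      · rw [Finset.mem_singleton.mp hx2]
        exact Submodule.mem_span_singleton_self a
    · rw [Submodule.span_le, Set.singleton_subset_iff]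
      show L a = 0
      rw [hLx, Vadd_self, hc]
      have h2 : F a + F 0 + (F 0 + F a) = (F a + F a) + (F 0 + F 0) := by abel
      rw [h2, Vadd_self, Vadd_self, add_zero]
  have hfinV : Module.finrank (ZMod 2) (V n) = n := by
    simp [Module.finrank_fintype_fun_eq_card]
  have hkerrank : Module.finrank (ZMod 2) (LinearMap.ker L) = 1 := by
    rw [hker]; exact finrank_span_singleton ha
  have hprank : Module.finrank (ZMod 2) p + 1 = n := by
    have := LinearMap.finrank_range_add_finrank_ker L
    rw [hkerrank, hfinV] at this
    exact this
  -- quotient has dimension 1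
  have hq1 : Module.finrank (ZMod 2) (V n ⧸ p) = 1 := by
    have := Submodule.finrank_quotient_add_finrank p
    rw [hfinV] at this
    omega
  obtain ⟨e⟩ : Nonempty ((V n ⧸ p) ≃ₗ[ZMod 2] ZMod 2) := by
    apply FiniteDimensional.nonempty_linearEquiv_of_finrank_eq
    rw [hq1, Module.finrank_self]
  set f : V n →ₗ[ZMod 2] ZMod 2 := e.toLinearMap ∘ₗ p.mkQ with hf
  have hfker : LinearMap.ker f = p := by
    rw [hf, LinearMap.ker_comp, LinearEquiv.ker, Submodule.comap_bot, Submodule.ker_mkQ]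
  set u : V n := fun i => f (Pi.single i 1) with hu
  have hsingle : ∀ (i : Fin n) (y : V n), Pi.single i (y i) = y i • (Pi.single i 1 : V n) := by
    intro i y
    funext j
    by_cases hij : j = i <;> simp [Pi.single_apply, hij]
  have hsum : ∀ y : V n, ∑ i, Pi.single i (y i) = y := by
    intro y
    funext j
    rw [Finset.sum_apply]
    simp [Pi.single_apply]
  have hdu : ∀ y, dotp u y = f y := by
    intro y
    conv_rhs => rw [← hsum y]
    rw [map_sum]
    unfold dotp
    apply Finset.sum_congr rfl
    intro i _
    rw [hsingle i y, map_smul]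
    simp [hu, mul_comm]
  have hune : u ≠ 0 := by
    intro h0
    have hf0 : f = 0 := by
      apply LinearMap.ext
      intro y
      rw [← hdu y, h0]
      simp [dotp]
    have : p = ⊤ := by rw [← hfker, hf0]; exact LinearMap.ker_zero
    rw [this] at hprank
    rw [finrank_top, hfinV] at hprank
    omega
  refine ⟨u, hune, dotp u c, ?_⟩
  ext y
  simp only [Set.mem_setOf_eq]
  rw [hdu y, hdu c]
  constructor
  · rintro ⟨x, hx⟩
    have hyc : y + c ∈ p := by
      refine ⟨x, ?_⟩
      rw [hLx, hx]
    have : f (y + c) = 0 := by rw [← hfker] at hyc; exact hyc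
    rw [map_add] at this
    exact zmod2_eq_of_add _ _ this
  · intro hfy
    have : f (y + c) = 0 := by
      rw [map_add, hfy, zmod2_add_self]
    have hyc : y + c ∈ p := by rw [← hfker]; exact this
    obtain ⟨x, hx⟩ := hyc
    refine ⟨x, ?_⟩
    rw [hLx] at hx
    have := congrArg (· + c) hx
    rw [add_assoc, Vadd_self, add_zero, add_assoc, Vadd_self, add_zero] at this
    exact this
end

section
/- Let F: 𝔽₂ⁿ → 𝔽₂ⁿ be a quadratic APN function with n odd. Then the map Φ_F: 𝔽₂ⁿ → 𝔽₂ⁿ, defined by Φ_F(0)=0 and, for a ≠ 0, Φ_F(a) being the unique nonzero vector u with B_a(F) = {y : u·y = ε} for some ε ∈ 𝔽₂, is a permutation of 𝔽₂ⁿ. -/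
open Finset

namespace Stmt1Aux

lemma dotp_add {n} (u y z : V n) : dotp u (y + z) = dotp u y + dotp u z := by
  simp [dotp, Pi.add_apply, mul_add, Finset.sum_add_distrib]

lemma dotp_zero {n} (u : V n) : dotp u (0 : V n) = 0 := by simp [dotp]

lemma dotp_single {n} (u : V n) (j : Fin n) : dotp u (Pi.single j 1) = u j := by
  simp [dotp, Pi.single_apply]

def chi (s : ZMod 2) : ℤ := (-1) ^ s.val

lemma chi_add : ∀ s t : ZMod 2, chi (s + t) = chi s * chi t := by decide

lemma zmod2_cases : ∀ c : ZMod 2, c = 0 ∨ c = 1 := by decide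

/-- If the affine hyperplane `{y | v·y = c}` is contained in `{y | u·y = d}`
for nonzero `u, v`, then `u = v`. -/
lemma eq_of_hyperplane {n : ℕ} {v u : V n} {c d : ZMod 2}
    (hv : v ≠ 0) (hu : u ≠ 0)
    (h : ∀ y, dotp v y = c → dotp u y = d) : u = v := by
  obtain ⟨j, hj⟩ := Function.ne_iff.mp hv
  have hvj : v j = 1 := by
    rcases zmod2_cases (v j) with h0 | h1
    · exact absurd (by simpa using h0) (by simpa using hj)
    · exact h1
  obtain ⟨z₁, hz₁⟩ : ∃ z₁, dotp v z₁ = c := by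
    rcases zmod2_cases c with rfl | rfl
    · exact ⟨0, dotp_zero v⟩
    · exact ⟨Pi.single j 1, by rw [dotp_single, hvj]⟩
  have hd : dotp u z₁ = d := h z₁ hz₁
  have ker : ∀ k, dotp v k = 0 → dotp u k = 0 := by
    intro k hk
    have h1 : dotp v (k + z₁) = c := by rw [dotp_add, hk, hz₁, zero_add]
    have h2 := h _ h1
    rw [dotp_add, hd] at h2
    exact (by decide : ∀ p q : ZMod 2, p + q = q → p = 0) _ _ h2
  have lin : ∀ y, dotp u y = u j * dotp v y := by
    intro y
    rcases zmod2_cases (dotp v y) with h0 | h1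
    · rw [h0, mul_zero]; exact ker y h0
    · rw [h1, mul_one]
      have hk : dotp v (y + Pi.single j 1) = 0 := by
        rw [dotp_add, h1, dotp_single, hvj]; decide
      have h2 := ker _ hk
      rw [dotp_add, dotp_single] at h2
      exact (by decide : ∀ p q : ZMod 2, p + q = 0 → p = q) _ _ h2
  have comp : ∀ i, u i = u j * v i := by
    intro i
    have := lin (Pi.single i 1)
    rwa [dotp_single, dotp_single] at this
  rcases zmod2_cases (u j) with h0 | h1
  · exfalso; apply hu; funext i
    have := comp i; rw [h0, zero_mul] at this; simpa using this
  · funext i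
    have := comp i; rw [h1, one_mul] at this; exact this

/-- For any Boolean function whose second derivatives all vanish, on an
odd-dimensional space, some nonzero derivative direction gives a constant
derivative (the radical of the polar form is nontrivial): Walsh-sum argument. -/
lemma exists_good_dir {n : ℕ} (hn : Odd n) (f : V n → ZMod 2)
    (H1 : ∀ x y a : V n,
      f (x + y + a) + f (x + y) + f (x + a) + f x + f (y + a) + f y + f a + f 0 = 0) :
    ∃ a : V n, a ≠ 0 ∧ ∀ x, f x + f (x + a) = f 0 + f a := by
  by_contra hcon
  push_neg at hcon
  set W : ℤ := ∑ x : V n, chi (f x) with hW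
  have step1 : W * W = ∑ a : V n, ∑ x : V n, chi (f x + f (x + a)) := by
    rw [hW, Finset.sum_mul_sum]
    have : ∀ x : V n, ∑ y : V n, chi (f x) * chi (f y)
        = ∑ a : V n, chi (f x + f (x + a)) := by
      intro x
      calc ∑ y : V n, chi (f x) * chi (f y)
          = ∑ a : V n, chi (f x) * chi (f ((Equiv.addLeft x) a)) :=
            (Equiv.sum_comp (Equiv.addLeft x) (fun y => chi (f x) * chi (f y))).symm
        _ = ∑ a : V n, chi (f x + f (x + a)) := by
            refine Finset.sum_congr rfl fun a _ => ?_
            rw [chi_add]; rfl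
    calc ∑ x : V n, ∑ y : V n, chi (f x) * chi (f y)
        = ∑ x : V n, ∑ a : V n, chi (f x + f (x + a)) :=
          Finset.sum_congr rfl fun x _ => this x
      _ = ∑ a : V n, ∑ x : V n, chi (f x + f (x + a)) := Finset.sum_comm
  have inner0 : ∀ a : V n, a ≠ 0 → ∑ x : V n, chi (f x + f (x + a)) = 0 := by
    intro a ha
    obtain ⟨x₀, hx₀⟩ := hcon a ha
    set g : V n → ZMod 2 := fun x => f x + f (x + a) + (f 0 + f a) with hg
    have gadd : ∀ x y : V n, g (x + y) = g x + g y := by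
      intro x y
      show f (x + y) + f (x + y + a) + (f 0 + f a)
          = (f x + f (x + a) + (f 0 + f a)) + (f y + f (y + a) + (f 0 + f a))
      exact (by decide : ∀ A B C D E G K L : ZMod 2,
          A + B + C + D + E + G + K + L = 0 →
          B + A + (L + K) = (D + C + (L + K)) + (G + E + (L + K)))
        _ _ _ _ _ _ _ _ (H1 x y a)
    have hgx₀ : g x₀ = 1 := by
      show f x₀ + f (x₀ + a) + (f 0 + f a) = 1
      exact (by decide : ∀ p q r : ZMod 2, p + q ≠ r → p + q + r = 1) _ _ _ hx₀
    have hsplit : ∀ x : V n, f x + f (x + a) = g x + (f 0 + f a) := by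
      intro x
      show f x + f (x + a) = f x + f (x + a) + (f 0 + f a) + (f 0 + f a)
      exact (by decide : ∀ p r : ZMod 2, p = p + r + r) _ _
    have hS : (∑ x : V n, chi (g x)) = 0 := by
      have : (∑ x : V n, chi (g x)) = -(∑ x : V n, chi (g x)) := by
        calc (∑ x : V n, chi (g x))
            = ∑ x : V n, chi (g ((Equiv.addRight x₀) x)) :=
              (Equiv.sum_comp (Equiv.addRight x₀) (fun x => chi (g x))).symm
          _ = ∑ x : V n, -(chi (g x)) := by
              refine Finset.sum_congr rfl fun x _ => ?_
              show chi (g (x + x₀)) = -(chi (g x))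
              rw [gadd, hgx₀, chi_add, (by decide : chi 1 = -1), mul_neg_one]
          _ = -(∑ x : V n, chi (g x)) := by rw [Finset.sum_neg_distrib]
      linarith
    calc ∑ x : V n, chi (f x + f (x + a))
        = ∑ x : V n, chi (g x) * chi (f 0 + f a) := by
          refine Finset.sum_congr rfl fun x _ => ?_
          rw [hsplit x, chi_add]
      _ = (∑ x : V n, chi (g x)) * chi (f 0 + f a) := by rw [Finset.sum_mul]
      _ = 0 := by rw [hS, zero_mul]
  have inner_zero : ∑ x : V n, chi (f x + f (x + 0)) = 2 ^ n := by
    have : ∀ x : V n, chi (f x + f (x + 0)) = 1 := by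
      intro x
      rw [add_zero]
      exact congrArg chi ((by decide : ∀ p : ZMod 2, p + p = 0) (f x)) ▸ rfl
    rw [Finset.sum_congr rfl fun x _ => this x]
    simp [Fintype.card_fun]
  have hWW : W * W = 2 ^ n := by
    rw [step1, Fintype.sum_eq_single (0 : V n) inner0, inner_zero]
  have hnat : W.natAbs * W.natAbs = 2 ^ n := by
    have := congrArg Int.natAbs hWW
    rwa [Int.natAbs_mul,
      show ((2 : ℤ) ^ n).natAbs = 2 ^ n by rw [Int.natAbs_pow]; rfl] at this
  obtain ⟨m, hmn, hk⟩ := (Nat.dvd_prime_pow Nat.prime_two).mp ⟨W.natAbs, hnat.symm⟩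
  rw [hk, ← pow_add] at hnat
  have := Nat.pow_right_injective (le_refl 2) hnat
  exact (Nat.not_odd_iff_even.mpr ⟨m, by omega⟩) hn

end Stmt1Aux

theorem stmt1 {n : ℕ} (hn : Odd n) (F Φ : V n → V n) (φ : V n → ZMod 2)
    (hq : IsQuadratic F) (hAPN : IsAPN F) (hspec : PhiSpec F Φ φ) :
    Function.Bijective Φ := by
  classical
  open Stmt1Aux in
  obtain ⟨hΦ0, hφ0, hspec'⟩ := hspec
  refine Finite.surjective_iff_bijective.mp ?_
  intro u
  by_cases hu : u = 0
  · exact ⟨0, by rw [hΦ0, hu]⟩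
  · obtain ⟨a, ha0, hc⟩ := exists_good_dir hn (fun x => dotp u (F x)) (fun x y a => by
      have := congrArg (dotp u) (hq.1 x y a)
      simpa [dotp_add, dotp_zero] using this)
    obtain ⟨hΦa, hset⟩ := hspec' a ha0
    refine ⟨a, ?_⟩
    have key : ∀ y, dotp (Φ a) y = φ a →
        dotp u y = dotp u (F 0) + dotp u (F a) := by
      intro y hy
      have hmem : y ∈ {y : V n | ∃ x, F x + F (x + a) = y} := by
        rw [hset]; exact hy
      obtain ⟨x, hx⟩ := hmem
      rw [← hx, dotp_add]
      exact hc x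
    exact (eq_of_hyperplane hΦa hu key).symm
end

section
/- Let F: 𝔽₂ⁿ → 𝔽₂ⁿ be a quadratic APN function with n even. Then for every nonzero v ∈ 𝔽₂ⁿ, the set A_v = {a ∈ 𝔽₂ⁿ : Φ_F(a) = v} ∪ {0} is a linear subspace of 𝔽₂ⁿ of even dimension. -/
open Finset

lemma zmod2_cases : ∀ c : ZMod 2, c = 0 ∨ c = 1 := by decide
lemma zmod2_two : (2 : ZMod 2) = 0 := by decide
lemma zmod2_add_eq_zero : ∀ a b : ZMod 2, a + b = 0 ↔ a = b := by decide

lemma m2_add_self {M : Type*} [AddCommGroup M] [Module (ZMod 2) M] (m : M) : m + m = 0 := by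
  have h : m + m = ((1 : ZMod 2) + 1) • m := by rw [add_smul, one_smul]
  rw [h, show (1 : ZMod 2) + 1 = 0 by decide, zero_smul]

lemma m2_eq {M : Type*} [AddCommGroup M] [Module (ZMod 2) M] {m m' : M}
    (h : m + m' = 0) : m = m' := by
  have := m2_add_self m'
  calc m = m + (m' + m') := by rw [this, add_zero]
  _ = (m + m') + m' := by rw [add_assoc]
  _ = m' := by rw [h, zero_add]

lemma dotp_add_right {n : ℕ} (u y z : V n) : dotp u (y + z) = dotp u y + dotp u z := by
  simp [dotp, mul_add, Finset.sum_add_distrib]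

lemma dotp_add_left {n : ℕ} (u w y : V n) : dotp (u + w) y = dotp u y + dotp w y := by
  simp [dotp, add_mul, Finset.sum_add_distrib]

lemma dotp_zero_right {n : ℕ} (u : V n) : dotp u 0 = 0 := by simp [dotp]

lemma dotp_single {n : ℕ} (u : V n) (i : Fin n) : dotp u (Pi.single i 1) = u i := by
  simp [dotp, Pi.single_apply]

lemma exists_dotp_one {n : ℕ} {u : V n} (hu : u ≠ 0) : ∃ s, dotp u s = 1 := by
  have : ∃ i, u i ≠ 0 := by
    by_contra h; push_neg at h; exact hu (funext h)
  obtain ⟨i, hi⟩ := this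
  refine ⟨Pi.single i 1, ?_⟩
  rw [dotp_single]
  rcases zmod2_cases (u i) with h | h
  · exact absurd h hi
  · exact h

lemma separate {n : ℕ} {u w : V n} (hw : w ≠ 0) (hne : u ≠ w) :
    ∃ t, dotp u t = 0 ∧ dotp w t = 1 := by
  have huw : u + w ≠ 0 := fun h => hne (m2_eq h)
  obtain ⟨s, hs⟩ := exists_dotp_one huw
  rw [dotp_add_left] at hs
  rcases zmod2_cases (dotp u s) with h | h
  · exact ⟨s, h, by rw [h, zero_add] at hs; exact hs⟩
  · have hws : dotp w s = 0 := by
      rw [h] at hs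
      rcases zmod2_cases (dotp w s) with h3 | h3
      · exact h3
      · rw [h3] at hs; exact absurd hs (by decide)
    obtain ⟨q, hq⟩ := exists_dotp_one hw
    rcases zmod2_cases (dotp u q) with h2 | h2
    · exact ⟨q, h2, hq⟩
    · refine ⟨q + s, ?_, ?_⟩
      · rw [dotp_add_right, h, h2]; decide
      · rw [dotp_add_right, hq, hws, add_zero]

def beta {n : ℕ} (F : V n → V n) (a x : V n) : V n := F (x + a) + F x + F a + F 0

lemma beta_comm {n : ℕ} (F : V n → V n) (a x : V n) : beta F a x = beta F x a := by
  unfold beta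
  rw [add_comm x a]
  abel

lemma beta_add_right {n : ℕ} {F : V n → V n}
    (hq1 : ∀ x y a : V n,
      F (x + y + a) + F (x + y) + F (x + a) + F x
        + F (y + a) + F y + F a + F 0 = 0)
    (a x y : V n) : beta F a (x + y) = beta F a x + beta F a y := by
  unfold beta
  funext i
  have h := congrFun (hq1 x y a) i
  simp only [Pi.add_apply, Pi.zero_apply] at h ⊢
  have h2 : (2 : ZMod 2) = 0 := by decide
  linear_combination h - (F (x + a) i + F x i + F (y + a) i + F y i + F a i + F 0 i) * h2

lemma beta_zero_right {n : ℕ} (F : V n → V n) (a : V n) : beta F a 0 = 0 := by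
  unfold beta
  rw [zero_add]
  funext i
  simp only [Pi.add_apply, Pi.zero_apply]
  have h2 : (2 : ZMod 2) = 0 := by decide
  linear_combination (F a i + F 0 i) * h2

def Bform {n : ℕ} (F : V n → V n) (v : V n)
    (hq1 : ∀ x y a : V n,
      F (x + y + a) + F (x + y) + F (x + a) + F x
        + F (y + a) + F y + F a + F 0 = 0) :
    V n →ₗ[ZMod 2] V n →ₗ[ZMod 2] ZMod 2 :=
  LinearMap.mk₂ (ZMod 2) (fun a x => dotp v (beta F a x))
    (fun a a' x => by
      rw [beta_comm F _ x, beta_comm F a x, beta_comm F a' x, beta_add_right hq1,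
        dotp_add_right])
    (fun c a x => by
      rcases zmod2_cases c with rfl | rfl
      · rw [zero_smul, zero_smul, beta_comm, beta_zero_right, dotp_zero_right]
      · rw [one_smul, one_smul])
    (fun a x x' => by rw [beta_add_right hq1, dotp_add_right])
    (fun c a x => by
      rcases zmod2_cases c with rfl | rfl
      · rw [zero_smul, zero_smul, beta_zero_right, dotp_zero_right]
      · rw [one_smul, one_smul])

lemma Bform_apply {n : ℕ} (F : V n → V n) (v : V n) (hq1) (a x : V n) :
    Bform F v hq1 a x = dotp v (beta F a x) := rfl

lemma beta_self {n : ℕ} (F : V n → V n) (a : V n) : beta F a a = 0 := by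
  unfold beta
  rw [m2_add_self a]
  funext i
  simp only [Pi.add_apply, Pi.zero_apply]
  have h2 : (2 : ZMod 2) = 0 := by decide
  linear_combination (F 0 i + F a i) * h2

open Module in
lemma alt_even : ∀ (N : ℕ) (W : Type) [AddCommGroup W] [Module (ZMod 2) W]
    [FiniteDimensional (ZMod 2) W], finrank (ZMod 2) W = N →
    ∀ B : W →ₗ[ZMod 2] W →ₗ[ZMod 2] ZMod 2, (∀ z, B z z = 0) →
    Even (N + finrank (ZMod 2) (LinearMap.ker B)) := by
  intro N
  induction N using Nat.strong_induction_on with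
  | _ N ih =>
  intro W _ _ _ hdim B halt
  have hsym : ∀ z w : W, B z w = B w z := by
    intro z w
    have h := halt (z + w)
    simp only [map_add, LinearMap.add_apply, halt z, halt w, zero_add, add_zero] at h
    exact ((zmod2_add_eq_zero _ _).mp h).symm
  by_cases hB : B = 0
  · subst hB
    rw [LinearMap.ker_zero, finrank_top, hdim]
    exact ⟨N, rfl⟩
  · have hex : ∃ x y, B x y ≠ 0 := by
      by_contra h
      push_neg at h
      exact hB (LinearMap.ext fun x => LinearMap.ext fun y => h x y)
    obtain ⟨x, y, hxy0⟩ := hex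
    have hxy : B x y = 1 := by
      rcases zmod2_cases (B x y) with h | h
      · exact absurd h hxy0
      · exact h
    have hyx : B y x = 1 := by rw [hsym y x, hxy]
    set φ : W →ₗ[ZMod 2] ZMod 2 × ZMod 2 := (B x).prod (B y) with hφ
    have hsurj : Function.Surjective φ := by
      rintro ⟨a, b⟩
      refine ⟨b • x + a • y, ?_⟩
      simp only [hφ, LinearMap.prod_apply, Function.prod, map_add, map_smul, smul_eq_mul,
        halt x, halt y, hxy, hyx, mul_zero, mul_one, zero_add, add_zero, Prod.mk.injEq,
        Prod.smul_mk, Prod.mk_add_mk, smul_zero]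
    have h1 := LinearMap.finrank_range_add_finrank_ker φ
    rw [LinearMap.range_eq_top.mpr hsurj, finrank_top] at h1
    have h2 : finrank (ZMod 2) (ZMod 2 × ZMod 2) = 2 := by
      rw [Module.finrank_prod, finrank_self]
    rw [h2, hdim] at h1
    set U : Submodule (ZMod 2) W := LinearMap.ker φ with hUdef
    have hUmem : ∀ z : W, z ∈ U ↔ B x z = 0 ∧ B y z = 0 := by
      intro z
      rw [hUdef, LinearMap.mem_ker, hφ]
      simp [Prod.ext_iff]
    set B' := B.domRestrict₁₂ U U with hB'
    have halt' : ∀ u : U, B' u u = 0 := fun u => halt u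
    have hIH := ih (finrank (ZMod 2) U) (by omega) U rfl B' halt'
    have hmap : (LinearMap.ker B').map U.subtype = LinearMap.ker B := by
      ext z
      simp only [Submodule.mem_map, LinearMap.mem_ker]
      constructor
      · rintro ⟨u, hu, rfl⟩
        obtain ⟨hux, huy⟩ := (hUmem u.1).mp u.2
        apply LinearMap.ext
        intro w'
        set w : W := w' + (B x w') • y + (B y w') • x with hw
        have hwx : B x w = 0 := by
          rw [hw]
          simp only [map_add, map_smul, smul_eq_mul, halt x, hxy, mul_one, mul_zero, add_zero]
          exact m2_add_self _
        have hwy : B y w = 0 := by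
          rw [hw]
          simp only [map_add, map_smul, smul_eq_mul, halt y, hyx, mul_one, mul_zero, add_zero]
          exact m2_add_self _
        have hwU : w ∈ U := (hUmem w).mpr ⟨hwx, hwy⟩
        have h0 : B u.1 w = 0 := DFunLike.congr_fun hu ⟨w, hwU⟩
        have hbuy : (B u.1) y = 0 := by rw [hsym]; exact huy
        have hbux : (B u.1) x = 0 := by rw [hsym]; exact hux
        rw [hw] at h0
        simpa [map_add, map_smul, smul_eq_mul, hbuy, hbux] using h0
      · intro hz
        have hz' : ∀ w : W, B z w = 0 := fun w => by rw [DFunLike.congr_fun hz w]; rfl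
        have hzU : z ∈ U := (hUmem z).mpr ⟨by rw [hsym x z]; exact hz' x,
          by rw [hsym y z]; exact hz' y⟩
        refine ⟨⟨z, hzU⟩, ?_, rfl⟩
        apply LinearMap.ext
        intro w
        exact hz' w.1
    have hfr : finrank (ZMod 2) (LinearMap.ker B) = finrank (ZMod 2) (LinearMap.ker B') := by
      rw [← hmap, Submodule.finrank_map_subtype_eq]
    obtain ⟨k, hk⟩ := hIH
    rw [hfr]
    exact ⟨k + 1, by omega⟩

section Main
variable {n : ℕ}

theorem main_thm (hn : Even n) (F Φ : V n → V n) (φ : V n → ZMod 2)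
    (hq1 : ∀ x y a : V n,
      F (x + y + a) + F (x + y) + F (x + a) + F x
        + F (y + a) + F y + F a + F 0 = 0)
    (hΦ0 : Φ 0 = 0)
    (hspec' : ∀ a : V n, a ≠ 0 → Φ a ≠ 0 ∧
      {y : V n | ∃ x, F x + F (x + a) = y} = {y : V n | dotp (Φ a) y = φ a})
    (v : V n) (hv : v ≠ 0) :
    ∃ S : Submodule (ZMod 2) (V n),
      (S : Set (V n)) = {a : V n | Φ a = v} ∪ {0} ∧
      Even (Module.finrank (ZMod 2) S) := by
  classical
  have h2 : (2 : ZMod 2) = 0 := by decide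
  set Bv := Bform F v hq1 with hBv
  have hsplit : ∀ p q r s : V n,
      dotp v (p + q + r + s) = dotp v p + dotp v q + dotp v r + dotp v s := by
    intro p q r s
    rw [dotp_add_right, dotp_add_right, dotp_add_right]
  refine ⟨LinearMap.ker Bv, ?_, ?_⟩
  · ext a
    simp only [SetLike.mem_coe, LinearMap.mem_ker, Set.mem_union, Set.mem_setOf_eq,
      Set.mem_singleton_iff]
    have hker : Bv a = 0 ↔ ∀ x, dotp v (beta F a x) = 0 := by
      constructor
      · intro h x
        have h3 := DFunLike.congr_fun h x
        rw [hBv, Bform_apply] at h3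
        exact h3
      · intro h
        apply LinearMap.ext
        intro x
        rw [hBv, Bform_apply, h x]
        rfl
    rw [hker]
    constructor
    · intro h
      by_cases ha : a = 0
      · exact Or.inr ha
      · left
        obtain ⟨hΦa, hset⟩ := hspec' a ha
        by_contra hne
        obtain ⟨t, ht1, ht2⟩ := separate hv hne
        have hy0 : dotp (Φ a) (F 0 + F (0 + a)) = φ a := by
          have hmem : (F 0 + F (0 + a)) ∈ {y : V n | ∃ x, F x + F (x + a) = y} := ⟨0, rfl⟩
          rw [hset] at hmem
          exact hmem
        have hy : (F 0 + F (0 + a) + t) ∈ {y : V n | dotp (Φ a) y = φ a} := by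
          show dotp (Φ a) _ = φ a
          rw [dotp_add_right, ht1, add_zero, hy0]
        rw [← hset] at hy
        obtain ⟨x, hx⟩ := hy
        rw [zero_add] at hx
        have e1 : dotp v (F (x + a)) + dotp v (F x) + dotp v (F a) + dotp v (F 0) = 0 := by
          have := h x
          rw [show beta F a x = F (x + a) + F x + F a + F 0 from rfl, hsplit] at this
          exact this
        have e2 := congrArg (dotp v) hx
        rw [dotp_add_right, dotp_add_right, dotp_add_right, ht2] at e2
        have : (1 : ZMod 2) = 0 := by
          linear_combination e1 - e2 - (dotp v (F a) + dotp v (F 0)) * h2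
        exact absurd this (by decide)
    · intro h x
      rcases h with h | rfl
      · have ha : a ≠ 0 := by
          intro h0
          rw [h0, hΦ0] at h
          exact hv h.symm
        obtain ⟨hΦa, hset⟩ := hspec' a ha
        have k1 : dotp v (F x) + dotp v (F (x + a)) = φ a := by
          have hmem : (F x + F (x + a)) ∈ {y : V n | ∃ x', F x' + F (x' + a) = y} := ⟨x, rfl⟩
          rw [hset] at hmem
          have : dotp (Φ a) (F x + F (x + a)) = φ a := hmem
          rw [h, dotp_add_right] at this
          exact this
        have k2 : dotp v (F 0) + dotp v (F a) = φ a := by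
          have hmem : (F 0 + F (0 + a)) ∈ {y : V n | ∃ x', F x' + F (x' + a) = y} := ⟨0, rfl⟩
          rw [hset] at hmem
          have : dotp (Φ a) (F 0 + F (0 + a)) = φ a := hmem
          rw [h, zero_add, dotp_add_right] at this
          exact this
        rw [show beta F a x = F (x + a) + F x + F a + F 0 from rfl, hsplit]
        linear_combination k1 + k2 + (φ a) * h2
      · rw [beta_comm, beta_zero_right, dotp_zero_right]
  · have halt : ∀ z, Bv z z = 0 := fun z => by
      rw [hBv, Bform_apply, beta_self, dotp_zero_right]
    have heven := alt_even n (V n) (Module.finrank_fin_fun (ZMod 2)) Bv halt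
    exact (Nat.even_add.mp heven).mp hn

end Main

theorem stmt2 {n : ℕ} (hn : Even n) (F Φ : V n → V n) (φ : V n → ZMod 2)
    (hq : IsQuadratic F) (hAPN : IsAPN F) (hspec : PhiSpec F Φ φ)
    (v : V n) (hv : v ≠ 0) :
    ∃ S : Submodule (ZMod 2) (V n),
      (S : Set (V n)) = {a : V n | Φ a = v} ∪ {0} ∧
      Even (Module.finrank (ZMod 2) S) := by
  obtain ⟨hq1, -⟩ := hq
  obtain ⟨hΦ0, -, hspec'⟩ := hspec
  exact main_thm hn F Φ φ hq1 hΦ0 hspec' v hv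
end

section
/- Let F: 𝔽₂ⁿ → 𝔽₂ⁿ be a quadratic APN function with n even, n ≥ 4. Then each coordinate function (Φ_F)_i of Φ_F can be written as (Φ_F)_i(x) = f_i(x) + λ_i·(x₂x₃⋯x_n + x₁x₃⋯x_n + ⋯ + x₁x₂⋯x_{n−1} + x₁x₂⋯x_n), where f_i is a Boolean function of algebraic degree at most n−2 and λ_i ∈ 𝔽₂. In other words, in the algebraic normal form of (Φ_F)_i, either no monomial of degree ≥ n−1 occurs, or all n monomials of degree n−1 together with the monomial of degree n occur. -/
open Finset

namespace S9

variable {n : ℕ}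

lemma two_cases (t : ZMod 2) : t = 0 ∨ t = 1 := by revert t; decide

lemma z2 (t : ZMod 2) : t + t = 0 := by revert t; decide

lemma vadd_self (x : V n) : x + x = 0 := by
  funext k; exact z2 (x k)

lemma add_eq_zero_iff_eq {x y : V n} : x + y = 0 ↔ x = y := by
  constructor
  · intro h
    have h2 : x + y + y = 0 + y := by rw [h]
    rwa [add_assoc, vadd_self, add_zero, zero_add] at h2
  · rintro rfl; exact vadd_self x

lemma dotp_add_right (u y z : V n) : dotp u (y + z) = dotp u y + dotp u z := by
  simp [dotp, Pi.add_apply, mul_add, Finset.sum_add_distrib]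

lemma dotp_zero_right (u : V n) : dotp u 0 = 0 := by simp [dotp]

def ev (i : Fin n) : V n := fun k => if k = i then 1 else 0

lemma dotp_ev (c : V n) (i : Fin n) : dotp c (ev i) = c i := by
  unfold dotp ev
  rw [Finset.sum_eq_single i]
  · simp
  · intro b _ hb; simp [hb]
  · intro h; exact absurd (Finset.mem_univ i) h

lemma exists_sep {u c : V n} (hu : u ≠ 0) (hc : c ≠ 0) (huc : u ≠ c) :
    ∃ y : V n, dotp c y = 0 ∧ dotp u y = 1 := by
  obtain ⟨i, hi⟩ : ∃ i, u i = 1 := by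
    by_contra h; push_neg at h
    apply hu; funext k
    rcases two_cases (u k) with h0 | h1
    · exact h0
    · exact absurd h1 (h k)
  rcases two_cases (c i) with hci | hci
  · exact ⟨ev i, by rw [dotp_ev]; exact hci, by rw [dotp_ev]; exact hi⟩
  · obtain ⟨j, hj⟩ : ∃ j, u j ≠ c j := by
      by_contra h; push_neg at h; exact huc (funext h)
    rcases two_cases (u j) with huj | huj
    · have hcj : c j = 1 := by
        rcases two_cases (c j) with h | h
        · exact absurd (huj.trans h.symm) hj
        · exact h
      refine ⟨ev i + ev j, ?_, ?_⟩
      · rw [dotp_add_right, dotp_ev, dotp_ev, hci, hcj]; decide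
      · have hij : i ≠ j := by
          intro h; rw [← h, hi] at huj; exact absurd huj (by decide)
        rw [dotp_add_right, dotp_ev, dotp_ev, hi, huj]; decide
    · have hcj : c j = 0 := by
        rcases two_cases (c j) with h | h
        · exact h
        · exact absurd (huj.trans h.symm) hj
      exact ⟨ev j, by rw [dotp_ev]; exact hcj, by rw [dotp_ev]; exact huj⟩

lemma sum_eq_card {α : Type*} [DecidableEq α] (s : Finset α) (f : α → ZMod 2) :
    ∑ a ∈ s, f a = ((s.filter fun a => f a = 1).card : ZMod 2) := by
  rw [← Finset.sum_filter_add_sum_filter_not s (fun a => f a = 1)]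
  have h1 : ∑ a ∈ s.filter (fun a => f a = 1), f a
      = ((s.filter fun a => f a = 1).card : ZMod 2) := by
    rw [Finset.sum_congr rfl (fun a ha => (Finset.mem_filter.mp ha).2)]
    simp
  have h2 : ∑ a ∈ s.filter (fun a => ¬ f a = 1), f a = 0 := by
    apply Finset.sum_eq_zero; intro a ha
    rcases two_cases (f a) with h | h
    · exact h
    · exact absurd h (Finset.mem_filter.mp ha).2
  rw [h1, h2, add_zero]

def chi (t : ZMod 2) : ℤ := 1 - 2 * t.val

lemma chi_add (s t : ZMod 2) : chi (s + t) = chi s * chi t := by revert s t; decide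
lemma chi_zero : chi 0 = 1 := by decide
lemma chi_add_one (t : ZMod 2) : chi (t + 1) = - chi t := by revert t; decide

lemma cardV : Fintype.card (V n) = 2 ^ n := by
  simp [Fintype.card_fun]


/-- The symmetric bilinear map associated with `F`. -/
def Bil (F : V n → V n) (a x : V n) : V n := F (x + a) + F x + F a + F 0

lemma bil_symm (F : V n → V n) (a x : V n) : Bil F a x = Bil F x a := by
  unfold Bil; rw [add_comm x a]; abel

lemma bil_add (F : V n → V n)
    (hq1 : ∀ x y a : V n, F (x + y + a) + F (x + y) + F (x + a) + F x
      + F (y + a) + F y + F a + F 0 = 0)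
    (a x y : V n) : Bil F a (x + y) = Bil F a x + Bil F a y := by
  funext k
  have h := congrFun (hq1 x y a) k
  simp only [Pi.add_apply, Pi.zero_apply] at h
  simp only [Bil, Pi.add_apply]
  linear_combination h - z2 (F (x + a) k) - z2 (F (y + a) k) - z2 (F x k)
    - z2 (F y k) - z2 (F a k) - z2 (F 0 k)

lemma bil_zero_left (F : V n → V n) (x : V n) : Bil F 0 x = 0 := by
  funext k
  simp only [Bil, add_zero, Pi.add_apply, Pi.zero_apply]
  linear_combination z2 (F x k) + z2 (F 0 k)

lemma bil_add_left (F : V n → V n)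
    (hq1 : ∀ x y a : V n, F (x + y + a) + F (x + y) + F (x + a) + F x
      + F (y + a) + F y + F a + F 0 = 0)
    (a b x : V n) : Bil F (a + b) x = Bil F a x + Bil F b x := by
  rw [bil_symm, bil_add F hq1, bil_symm F a x, bil_symm F b x]

/-- decomposition of `F (a+b) + F 0`. -/
lemma Fdecomp (F : V n → V n) (a b : V n) :
    F (a + b) + F 0 = Bil F a b + ((F a + F 0) + (F b + F 0)) := by
  funext k
  simp only [Bil, Pi.add_apply, add_comm b a]
  linear_combination - z2 (F a k) - z2 (F b k) - z2 (F 0 k)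

def gq (F : V n → V n) (u a : V n) : ZMod 2 := dotp u (F a + F 0)

lemma gq_zero (F : V n → V n) (u : V n) : gq F u 0 = 0 := by
  unfold gq; rw [vadd_self, dotp_zero_right]

lemma gq_add (F : V n → V n) (u a b : V n) :
    gq F u (a + b) = gq F u a + gq F u b + dotp u (Bil F a b) := by
  unfold gq
  rw [show F (a + b) + F 0 = Bil F a b + ((F a + F 0) + (F b + F 0)) from Fdecomp F a b]
  rw [dotp_add_right, dotp_add_right]
  ring

section Spec

variable {F Φ : V n → V n} {φ : V n → ZMod 2}

lemma spec_mem (hspec : PhiSpec F Φ φ) {a : V n} (ha : a ≠ 0) (x : V n) :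
    dotp (Φ a) (F x + F (x + a)) = φ a := by
  have h := (hspec.2.2 a ha).2
  have hx : (F x + F (x + a)) ∈ {y : V n | ∃ x, F x + F (x + a) = y} := ⟨x, rfl⟩
  rw [h] at hx; exact hx

lemma spec_phi_eq (hspec : PhiSpec F Φ φ) {a : V n} (ha : a ≠ 0) :
    φ a = dotp (Φ a) (F a + F 0) := by
  have h := spec_mem hspec ha 0
  rw [zero_add, add_comm] at h
  exact h.symm

lemma spec_bil_perp (hspec : PhiSpec F Φ φ) {a : V n} (ha : a ≠ 0) (x : V n) :
    dotp (Φ a) (Bil F a x) = 0 := by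
  have hb : Bil F a x = (F x + F (x + a)) + (F a + F 0) := by unfold Bil; abel
  rw [hb, dotp_add_right, spec_mem hspec ha x, ← spec_phi_eq hspec ha, z2]

lemma spec_surj (hspec : PhiSpec F Φ φ) {a : V n} (ha : a ≠ 0) {y : V n}
    (hy : dotp (Φ a) y = 0) : ∃ x, Bil F a x = y := by
  have h := Set.ext_iff.mp (hspec.2.2 a ha).2 (y + (F a + F 0))
  have hmem : dotp (Φ a) (y + (F a + F 0)) = φ a := by
    rw [dotp_add_right, hy, zero_add, spec_phi_eq hspec ha]
  obtain ⟨x, hx⟩ := h.mpr hmem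
  refine ⟨x, ?_⟩
  have hb : Bil F a x = (F x + F (x + a)) + (F a + F 0) := by unfold Bil; abel
  rw [hb, hx, add_assoc, vadd_self, add_zero]

/-- The radical of the bilinear form `u · Bil F · ·`, as a finset. -/
def Efin (F : V n → V n) (u : V n) : Finset (V n) :=
  Finset.univ.filter (fun a => ∀ x, dotp u (Bil F a x) = 0)

lemma mem_Efin {u a : V n} :
    a ∈ Efin F u ↔ ∀ x, dotp u (Bil F a x) = 0 := by
  simp [Efin]

lemma Efin_of_phi (hspec : PhiSpec F Φ φ) {a : V n} (ha : a ≠ 0) :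
    a ∈ Efin F (Φ a) := mem_Efin.mpr (spec_bil_perp hspec ha)

lemma phi_of_Efin (hspec : PhiSpec F Φ φ) {u a : V n} (hu : u ≠ 0) (ha : a ≠ 0)
    (hmem : a ∈ Efin F u) : Φ a = u := by
  by_contra hne
  have hPa : Φ a ≠ 0 := (hspec.2.2 a ha).1
  obtain ⟨y, hy0, hy1⟩ := exists_sep hu hPa (fun h => hne h.symm)
  obtain ⟨x, hx⟩ := spec_surj hspec ha hy0
  have := mem_Efin.mp hmem x
  rw [hx, hy1] at this
  exact one_ne_zero this

end Spec

def Esub (F : V n → V n) (u : V n)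
    (hq1 : ∀ x y a : V n, F (x + y + a) + F (x + y) + F (x + a) + F x
      + F (y + a) + F y + F a + F 0 = 0) : Submodule (ZMod 2) (V n) where
  carrier := {a | ∀ x, dotp u (Bil F a x) = 0}
  add_mem' := by
    intro a b ha hb x
    rw [bil_add_left F hq1, dotp_add_right, ha x, hb x, add_zero]
  zero_mem' := by
    intro x; rw [bil_zero_left, dotp_zero_right]
  smul_mem' := by
    intro c a ha
    rcases two_cases c with h | h <;> subst h
    · rw [zero_smul]; intro x; rw [bil_zero_left, dotp_zero_right]
    · rw [one_smul]; exact ha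

def glin (F : V n → V n) (u : V n)
    (hq1 : ∀ x y a : V n, F (x + y + a) + F (x + y) + F (x + a) + F x
      + F (y + a) + F y + F a + F 0 = 0) : Esub F u hq1 →ₗ[ZMod 2] ZMod 2 where
  toFun a := gq F u a.1
  map_add' a b := by
    have ha : ∀ x, dotp u (Bil F a.1 x) = 0 := a.2
    have h := gq_add F u a.1 b.1
    rw [ha b.1, add_zero] at h
    simpa using h
  map_smul' c a := by
    rcases two_cases c with h | h <;> subst h
    · simp [gq_zero]
    · simp

lemma fiber_even (hn : Even n) (F : V n → V n)
    (hq1 : ∀ x y a : V n, F (x + y + a) + F (x + y) + F (x + a) + F x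
      + F (y + a) + F y + F a + F 0 = 0)
    {u a0 : V n} (h0mem : a0 ∈ Efin F u) (h0g : gq F u a0 = 1) :
    Even ((Efin F u).filter (fun a => gq F u a = 1)).card := by
  obtain ⟨L, hL⟩ := LinearMap.exists_extend (glin F u hq1)
  set q : V n → ZMod 2 := fun x => gq F u x + L x with hqdef
  have hLE : ∀ a, a ∈ Efin F u → L a = gq F u a := by
    intro a ha
    have ha' : a ∈ Esub F u hq1 := mem_Efin.mp ha
    exact LinearMap.congr_fun hL ⟨a, ha'⟩
  have hqE : ∀ a ∈ Efin F u, q a = 0 := by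
    intro a ha
    show gq F u a + L a = 0
    rw [hLE a ha, z2]
  have hqadd : ∀ x z : V n, q (x + z) = q x + q z + dotp u (Bil F x z) := by
    intro x z
    show gq F u (x + z) + L (x + z) = (gq F u x + L x) + (gq F u z + L z) + _
    rw [gq_add, map_add]; ring
  set S : ℤ := ∑ x : V n, chi (q x) with hS
  have hinner0 : ∀ z ∈ Efin F u, (∑ x : V n, chi (dotp u (Bil F x z))) = (2^n : ℤ) := by
    intro z hz
    have h1 : ∀ x : V n, dotp u (Bil F x z) = 0 := by
      intro x; rw [bil_symm]; exact mem_Efin.mp hz x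
    calc ∑ x : V n, chi (dotp u (Bil F x z)) = ∑ _x : V n, (1 : ℤ) :=
          Finset.sum_congr rfl fun x _ => by rw [h1 x, chi_zero]
      _ = (2^n : ℤ) := by
          rw [Finset.sum_const, Finset.card_univ, cardV]; simp
  have hinner1 : ∀ z : V n, z ∉ Efin F u → (∑ x : V n, chi (dotp u (Bil F x z))) = 0 := by
    intro z hz
    obtain ⟨x0, hx0⟩ : ∃ x0, dotp u (Bil F z x0) = 1 := by
      by_contra h; push_neg at h
      refine hz (mem_Efin.mpr fun x => ?_)
      rcases two_cases (dotp u (Bil F z x)) with h' | h'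
      · exact h'
      · exact absurd h' (h x)
    have hkey : (∑ x : V n, chi (dotp u (Bil F x z)))
        = - ∑ x : V n, chi (dotp u (Bil F x z)) := by
      nth_rewrite 1 [← Equiv.sum_comp (Equiv.addRight x0) (fun x => chi (dotp u (Bil F x z)))]
      rw [← Finset.sum_neg_distrib]
      refine Finset.sum_congr rfl fun x _ => ?_
      have hb : dotp u (Bil F (x + x0) z) = dotp u (Bil F x z) + 1 := by
        rw [bil_add_left F hq1, dotp_add_right, bil_symm F x0 z, hx0]
      simp only [Equiv.coe_addRight]
      rw [hb, chi_add_one]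
    linarith
  have hSS : S * S = (2^n : ℤ) * ((Efin F u).card : ℤ) := by
    calc S * S = ∑ x : V n, ∑ y : V n, chi (q x) * chi (q y) := by
          rw [hS]; exact Finset.sum_mul_sum _ _ _ _
      _ = ∑ x : V n, ∑ z : V n, chi (q z) * chi (dotp u (Bil F x z)) := by
          refine Finset.sum_congr rfl fun x _ => ?_
          rw [← Equiv.sum_comp (Equiv.addLeft x) (fun y => chi (q x) * chi (q y))]
          refine Finset.sum_congr rfl fun z _ => ?_
          simp only [Equiv.coe_addLeft]
          rw [← chi_add, ← chi_add]
          congr 1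
          rw [hqadd]
          linear_combination z2 (q x)
      _ = ∑ z : V n, ∑ x : V n, chi (q z) * chi (dotp u (Bil F x z)) := Finset.sum_comm
      _ = ∑ z : V n, chi (q z) * ∑ x : V n, chi (dotp u (Bil F x z)) := by
          refine Finset.sum_congr rfl fun z _ => ?_
          rw [Finset.mul_sum]
      _ = ∑ z ∈ Efin F u, chi (q z) * (2^n : ℤ) := by
          rw [← Finset.sum_filter_add_sum_filter_not Finset.univ (fun z => z ∈ Efin F u)]
          have h2 : ∑ z ∈ Finset.univ.filter (fun z => ¬ z ∈ Efin F u),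
              chi (q z) * ∑ x : V n, chi (dotp u (Bil F x z)) = 0 :=
            Finset.sum_eq_zero fun z hz => by
              rw [hinner1 z (Finset.mem_filter.mp hz).2, mul_zero]
          rw [h2, add_zero, Finset.filter_univ_mem]
          exact Finset.sum_congr rfl fun z hz => by rw [hinner0 z hz]
      _ = ∑ _z ∈ Efin F u, (2^n : ℤ) := Finset.sum_congr rfl fun z hz => by
            rw [hqE z hz, chi_zero, one_mul]
      _ = (2^n : ℤ) * ((Efin F u).card : ℤ) := by
          rw [Finset.sum_const, nsmul_eq_mul]; ring
  set T1 := (Efin F u).filter (fun a => gq F u a = 1) with hT1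
  set T0 := (Efin F u).filter (fun a => ¬ gq F u a = 1) with hT0
  have hmemsum : ∀ a, a ∈ Efin F u → a + a0 ∈ Efin F u := by
    intro a ha
    refine mem_Efin.mpr fun x => ?_
    rw [bil_add_left F hq1, dotp_add_right, mem_Efin.mp ha x, mem_Efin.mp h0mem x, add_zero]
  have hcards : T1.card = T0.card := by
    refine Finset.card_bij' (fun a _ => a + a0) (fun a _ => a + a0) ?_ ?_ ?_ ?_
    · intro a ha
      rw [hT1, Finset.mem_filter] at ha
      rw [hT0, Finset.mem_filter]
      refine ⟨hmemsum a ha.1, ?_⟩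
      rw [gq_add, mem_Efin.mp ha.1 a0, ha.2, h0g]
      decide
    · intro a ha
      rw [hT0, Finset.mem_filter] at ha
      rw [hT1, Finset.mem_filter]
      refine ⟨hmemsum a ha.1, ?_⟩
      have ha0 : gq F u a = 0 := by
        rcases two_cases (gq F u a) with h | h
        · exact h
        · exact absurd h ha.2
      rw [gq_add, mem_Efin.mp ha.1 a0, ha0, h0g]
      decide
    · intro a _; show a + a0 + a0 = a; rw [add_assoc, vadd_self, add_zero]
    · intro a _; show a + a0 + a0 = a; rw [add_assoc, vadd_self, add_zero]
  have hsplit : T1.card + T0.card = (Efin F u).card :=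
    Finset.card_filter_add_card_filter_not _
  have hcard2 : (Efin F u).card = 2 * T1.card := by omega
  have hc1 : T1.card ≠ 0 := by
    have : a0 ∈ T1 := by rw [hT1]; exact Finset.mem_filter.mpr ⟨h0mem, h0g⟩
    exact Finset.card_ne_zero_of_mem this
  have hSnat : S.natAbs * S.natAbs = 2^n * (2 * T1.card) := by
    have h1 : ((S.natAbs * S.natAbs : ℕ) : ℤ) = S * S := Int.natAbs_mul_self
    rw [hSS, hcard2] at h1
    exact_mod_cast h1
  have hSne : S.natAbs ≠ 0 := by
    intro h
    rw [h, Nat.mul_zero] at hSnat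
    have : 2^n * (2 * T1.card) ≠ 0 := by positivity
    exact this hSnat.symm
  haveI : Fact (Nat.Prime 2) := ⟨Nat.prime_two⟩
  have hv := congrArg (padicValNat 2) hSnat
  rw [padicValNat.mul hSne hSne,
      padicValNat.mul (pow_ne_zero n two_ne_zero) (by omega),
      padicValNat.prime_pow,
      padicValNat.mul two_ne_zero hc1,
      padicValNat.self (by omega)] at hv
  obtain ⟨m, hm⟩ := hn
  have hvge : 1 ≤ padicValNat 2 T1.card := by omega
  have hdvd : 2^1 ∣ T1.card := (padicValNat_dvd_iff 1 T1.card).mpr (Or.inr hvge)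
  rw [pow_one] at hdvd
  obtain ⟨k, hk⟩ := hdvd
  exact ⟨k, by omega⟩

lemma core (hn : Even n) {F Φ : V n → V n} {φ : V n → ZMod 2}
    (hq1 : ∀ x y a : V n, F (x + y + a) + F (x + y) + F (x + a) + F x
      + F (y + a) + F y + F a + F 0 = 0)
    (hspec : PhiSpec F Φ φ) :
    ∑ a : V n, φ a = 1 := by
  rw [sum_eq_card Finset.univ φ]
  set W := Finset.univ.filter (fun a : V n => φ a = 1) with hW
  set A := W.filter (fun a => ¬ a = 0) with hA
  have hWsplit : (W.filter (fun a => a = 0)).card + A.card = W.card :=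
    Finset.card_filter_add_card_filter_not _
  have hW0 : W.filter (fun a => a = 0) = {0} := by
    ext a
    simp only [hW, Finset.mem_filter, Finset.mem_univ, true_and, Finset.mem_singleton]
    constructor
    · rintro ⟨_, h⟩; exact h
    · rintro rfl; exact ⟨hspec.2.1, rfl⟩
  have hAeven : Even A.card := by
    rw [Finset.card_eq_sum_card_fiberwise (f := Φ) (t := Finset.univ)
      (fun x _ => Finset.mem_univ _)]
    refine Finset.even_sum _ fun u _ => ?_
    rcases Finset.eq_empty_or_nonempty (A.filter (fun a => Φ a = u)) with he | ⟨a0, ha0⟩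
    · rw [he]; exact ⟨0, rfl⟩
    · have ha0' := ha0
      rw [Finset.mem_filter, hA, Finset.mem_filter, hW, Finset.mem_filter] at ha0'
      obtain ⟨⟨⟨_, hφ0⟩, hne0⟩, hΦ0⟩ := ha0'
      have hu : u ≠ 0 := by
        rw [← hΦ0]; exact (hspec.2.2 a0 hne0).1
      have hsets : A.filter (fun a => Φ a = u)
          = (Efin F u).filter (fun a => gq F u a = 1) := by
        ext a
        rw [Finset.mem_filter, hA, Finset.mem_filter, hW, Finset.mem_filter,
          Finset.mem_filter]
        constructor
        · rintro ⟨⟨⟨_, hφ⟩, hne⟩, hΦ⟩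
          refine ⟨by rw [← hΦ]; exact Efin_of_phi hspec hne, ?_⟩
          show dotp u (F a + F 0) = 1
          rw [← hΦ, ← spec_phi_eq hspec hne]; exact hφ
        · rintro ⟨hE, hg⟩
          have hne : a ≠ 0 := by
            rintro rfl
            rw [gq_zero] at hg
            exact absurd hg (by decide)
          have hΦ : Φ a = u := phi_of_Efin hspec hu hne hE
          refine ⟨⟨⟨Finset.mem_univ a, ?_⟩, hne⟩, hΦ⟩
          rw [spec_phi_eq hspec hne, hΦ]; exact hg
      rw [hsets]
      have ha0'' := ha0
      rw [hsets, Finset.mem_filter] at ha0''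
      exact fiber_even hn F hq1 ha0''.1 ha0''.2
  obtain ⟨k, hk⟩ := hAeven
  have hWcard : W.card = 1 + (k + k) := by
    rw [← hWsplit, hW0, Finset.card_singleton, hk]
  rw [hWcard]
  push_cast
  rw [z2 (k : ZMod 2), add_zero]

lemma sum_xj_phi (hn : Even n) {F Φ : V n → V n} {φ : V n → ZMod 2}
    (hq1 : ∀ x y a : V n, F (x + y + a) + F (x + y) + F (x + a) + F x
      + F (y + a) + F y + F a + F 0 = 0)
    (hspec : PhiSpec F Φ φ) (i j : Fin n) :
    ∑ x : V n, x j * Φ x i = 0 := by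
  set L : V n → V n := fun x => fun k => if k = i then x j else 0 with hLdef
  have Ladd : ∀ p q : V n, L (p + q) = L p + L q := by
    intro p q; funext k
    simp only [hLdef, Pi.add_apply]
    split <;> simp
  set G : V n → V n := fun x => F x + L x with hGdef
  have hGq1 : ∀ x y a : V n, G (x + y + a) + G (x + y) + G (x + a) + G x
      + G (y + a) + G y + G a + G 0 = 0 := by
    intro x y a
    funext k
    have h := congrFun (hq1 x y a) k
    simp only [Pi.add_apply, Pi.zero_apply] at h ⊢
    simp only [hGdef, hLdef, Pi.add_apply, Pi.zero_apply]
    by_cases hk : k = i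
    · simp only [if_pos hk]
      linear_combination h + 2 * z2 (x j) + 2 * z2 (y j) + 2 * z2 (a j)
    · simp only [if_neg hk, add_zero]
      exact h
  set φ' : V n → ZMod 2 := fun a => φ a + a j * Φ a i with hφ'def
  have hdL : ∀ a : V n, dotp (Φ a) (L a) = a j * Φ a i := by
    intro a
    unfold dotp
    rw [Finset.sum_eq_single i]
    · simp only [hLdef, if_pos rfl]; ring
    · intro b _ hb; simp [hLdef, hb]
    · intro h; exact absurd (Finset.mem_univ i) h
  have hspecG : PhiSpec G Φ φ' := by
    refine ⟨hspec.1, ?_, ?_⟩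
    · show φ 0 + (0 : V n) j * Φ 0 i = 1
      simp [hspec.2.1]
    · intro a ha
      refine ⟨(hspec.2.2 a ha).1, ?_⟩
      have hG2 : ∀ x, G x + G (x + a) = (F x + F (x + a)) + L a := by
        intro x
        have h1 : L (x + a) = L x + L a := Ladd x a
        show (F x + L x) + (F (x + a) + L (x + a)) = _
        rw [h1]
        funext k
        simp only [Pi.add_apply]
        linear_combination z2 (L x k)
      have hs := Set.ext_iff.mp (hspec.2.2 a ha).2
      simp only [Set.mem_setOf_eq] at hs
      ext y
      simp only [Set.mem_setOf_eq]
      constructor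
      · rintro ⟨x, hx⟩
        have hFx : F x + F (x + a) = y + L a := by
          rw [← hx, hG2 x, add_assoc, vadd_self, add_zero]
        have h2 := (hs (y + L a)).mp ⟨x, hFx⟩
        rw [dotp_add_right, hdL a] at h2
        show dotp (Φ a) y = φ a + a j * Φ a i
        linear_combination h2 - z2 (a j * Φ a i)
      · intro hy
        have h2 : dotp (Φ a) (y + L a) = φ a := by
          rw [dotp_add_right, hdL a]
          show _ = φ a
          rw [hy]
          show φ a + a j * Φ a i + a j * Φ a i = φ a
          rw [add_assoc, z2, add_zero]
        obtain ⟨x, hx⟩ := (hs (y + L a)).mpr h2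
        refine ⟨x, ?_⟩
        rw [hG2 x, hx, add_assoc, vadd_self, add_zero]
  have h1 := core hn hGq1 hspecG
  have h2 := core hn hq1 hspec
  rw [hφ'def] at h1
  simp only [] at h1
  rw [Finset.sum_add_distrib, h2] at h1
  linear_combination h1

lemma mono_eq_ite (b x : V n) :
    mono b x = if (∀ i, b i = 1 → x i = 1) then 1 else 0 := by
  unfold mono
  split
  case isTrue h => exact Finset.prod_eq_one (fun k hk => h k (Finset.mem_filter.mp hk).2)
  case isFalse h =>
    push_neg at h
    obtain ⟨k, hbk, hxk⟩ := h
    refine Finset.prod_eq_zero (Finset.mem_filter.mpr ⟨Finset.mem_univ _, hbk⟩) ?_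
    rcases two_cases (x k) with h0 | h1
    · exact h0
    · exact absurd h1 hxk

lemma anfCoeff_mono (b c : V n) : anfCoeff (mono b) c = if b = c then 1 else 0 := by
  unfold anfCoeff
  rw [Finset.sum_congr rfl (fun x _ => mono_eq_ite b x), Finset.sum_boole, Finset.filter_filter]
  by_cases hbc : ∀ k, b k = 1 → c k = 1
  · set D := Finset.univ.filter (fun k => c k = 1 ∧ ¬ b k = 1) with hD
    have hcard : (Finset.univ.filter (fun x : V n =>
        (∀ i, x i = 1 → c i = 1) ∧ (∀ i, b i = 1 → x i = 1))).card = D.powerset.card := by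
      refine Finset.card_bij' (fun x _ => D.filter (fun k => x k = 1))
        (fun s _ => fun k => if b k = 1 ∨ k ∈ s then 1 else 0) ?_ ?_ ?_ ?_
      · intro x _
        exact Finset.mem_powerset.mpr (Finset.filter_subset _ _)
      · intro s hs
        rw [Finset.mem_powerset] at hs
        refine Finset.mem_filter.mpr ⟨Finset.mem_univ _, ?_, ?_⟩
        · intro k hk
          replace hk : (if b k = 1 ∨ k ∈ s then (1 : ZMod 2) else 0) = 1 := hk
          by_cases h : b k = 1 ∨ k ∈ s
          · rcases h with h | h
            · exact hbc k h
            · exact (Finset.mem_filter.mp ((hD ▸ hs) h)).2.1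
          · rw [if_neg h] at hk; exact absurd hk (by decide)
        · intro k hk
          show (if b k = 1 ∨ k ∈ s then (1 : ZMod 2) else 0) = 1
          rw [if_pos (Or.inl hk)]
      · intro x hx
        rw [Finset.mem_filter] at hx
        funext k
        show (if b k = 1 ∨ k ∈ D.filter (fun k => x k = 1) then (1 : ZMod 2) else 0) = x k
        by_cases hxk : x k = 1
        · rw [hxk, if_pos]
          by_cases hbk : b k = 1
          · exact Or.inl hbk
          · exact Or.inr (Finset.mem_filter.mpr
              ⟨Finset.mem_filter.mpr ⟨Finset.mem_univ _, hx.2.1 k hxk, hbk⟩, hxk⟩)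
        · rw [if_neg ?_]
          · rcases two_cases (x k) with h0 | h1
            · exact h0.symm
            · exact absurd h1 hxk
          · rintro (h | h)
            · exact hxk (hx.2.2 k h)
            · exact hxk (Finset.mem_filter.mp h).2
      · intro s hs
        rw [Finset.mem_powerset] at hs
        ext k
        rw [Finset.mem_filter]
        constructor
        · rintro ⟨hkD, hif⟩
          replace hif : (if b k = 1 ∨ k ∈ s then (1 : ZMod 2) else 0) = 1 := hif
          have hnb : ¬ b k = 1 := (Finset.mem_filter.mp (hD ▸ hkD)).2.2
          by_cases h : b k = 1 ∨ k ∈ s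
          · rcases h with h | h
            · exact absurd h hnb
            · exact h
          · rw [if_neg h] at hif; exact absurd hif (by decide)
        · intro hk
          refine ⟨hs hk, ?_⟩
          show (if b k = 1 ∨ k ∈ s then (1 : ZMod 2) else 0) = 1
          rw [if_pos (Or.inr hk)]
    rw [hcard, Finset.card_powerset]
    by_cases hbceq : b = c
    · have hDe : D = ∅ := by
        rw [hD, Finset.filter_eq_empty_iff]
        rintro k _ ⟨h1, h2⟩
        exact h2 (hbceq ▸ h1)
      rw [hDe, if_pos hbceq]
      simp
    · obtain ⟨k, hk⟩ : ∃ k, b k ≠ c k := by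
        by_contra h; push_neg at h; exact hbceq (funext h)
      have hkD : k ∈ D := by
        rcases two_cases (b k) with h0 | h1
        · rcases two_cases (c k) with hc0 | hc1
          · exact absurd (h0.trans hc0.symm) hk
          · exact Finset.mem_filter.mpr ⟨Finset.mem_univ _, hc1, by rw [h0]; decide⟩
        · exact absurd ((h1.trans (hbc k h1).symm)) hk
      have hDc : D.card ≠ 0 := Finset.card_ne_zero_of_mem hkD
      rw [if_neg hbceq]
      rw [Nat.cast_pow]
      have h2 : ((2 : ℕ) : ZMod 2) = 0 := by decide
      rw [h2, zero_pow hDc]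
  · have hempty : Finset.univ.filter (fun x : V n =>
        (∀ i, x i = 1 → c i = 1) ∧ (∀ i, b i = 1 → x i = 1)) = ∅ := by
      rw [Finset.filter_eq_empty_iff]
      rintro x _ ⟨h1, h2⟩
      exact hbc (fun k hk => h1 k (h2 k hk))
    have hbne : b ≠ c := by rintro rfl; exact hbc (fun k hk => hk)
    rw [hempty, if_neg hbne]
    simp

lemma anfCoeff_addf (p q : V n → ZMod 2) (c : V n) :
    anfCoeff (fun x => p x + q x) c = anfCoeff p c + anfCoeff q c :=
  Finset.sum_add_distrib

lemma anfCoeff_smulf (lam : ZMod 2) (q : V n → ZMod 2) (c : V n) :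
    anfCoeff (fun x => lam * q x) c = lam * anfCoeff q c :=
  (Finset.mul_sum _ _ _).symm

lemma anfCoeff_sumf (s : Finset (V n)) (h : V n → V n → ZMod 2) (c : V n) :
    anfCoeff (fun x => ∑ b ∈ s, h b x) c = ∑ b ∈ s, anfCoeff (h b) c :=
  Finset.sum_comm

lemma wt_le (a : V n) : wt a ≤ n := by
  refine le_trans (Finset.card_filter_le _ _) ?_
  rw [Finset.card_univ, Fintype.card_fin]

lemma eq_ones_of_wt {c : V n} (hc : wt c = n) : ∀ k, c k = 1 := by
  have huniv : Finset.univ.filter (fun k => c k = 1) = Finset.univ := by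
    apply Finset.eq_univ_of_card
    rw [show (Finset.univ.filter (fun k => c k = 1)).card = wt c from rfl, hc, Fintype.card_fin]
  intro k
  have hk : k ∈ Finset.univ.filter (fun k => c k = 1) := by
    rw [huniv]; exact Finset.mem_univ k
  exact (Finset.mem_filter.mp hk).2

lemma exists_j_of_wt {c : V n} (hc : wt c = n - 1) (hn : 1 ≤ n) :
    ∃ j : Fin n, ∀ k, c k = 1 ↔ k ≠ j := by
  have hsplit : (Finset.univ.filter (fun k => c k = 1)).card
      + (Finset.univ.filter (fun k => ¬ c k = 1)).card = n := by
    rw [Finset.card_filter_add_card_filter_not, Finset.card_univ, Fintype.card_fin]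
  have h1 : (Finset.univ.filter (fun k => ¬ c k = 1)).card = 1 := by
    have : wt c = (Finset.univ.filter (fun k => c k = 1)).card := rfl
    omega
  obtain ⟨j, hj⟩ := Finset.card_eq_one.mp h1
  have hmem : ∀ k, k ∈ ({j} : Finset (Fin n)) ↔ ¬ c k = 1 := by
    intro k
    rw [← hj, Finset.mem_filter]
    simp
  refine ⟨j, fun k => ?_⟩
  constructor
  · intro h hkj
    exact ((hmem k).mp (by rw [hkj]; exact Finset.mem_singleton_self j)) h
  · intro h
    rcases two_cases (c k) with h0 | h1
    · exact absurd (Finset.mem_singleton.mp ((hmem k).mpr (by rw [h0]; decide))) h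
    · exact h1

lemma anf_step (g : V n → ZMod 2) {c : V n} {j : Fin n} (hj : ∀ k, c k = 1 ↔ k ≠ j) :
    anfCoeff g c = anfCoeff g (fun _ => 1)
      + ∑ x ∈ Finset.univ.filter (fun x : V n => x j = 1), g x := by
  have h1 : anfCoeff g (fun _ => 1) = ∑ x : V n, g x := by
    unfold anfCoeff
    rw [Finset.filter_true_of_mem]
    intro x _ i _
    rfl
  have h2 : anfCoeff g c = ∑ x ∈ Finset.univ.filter (fun x : V n => ¬ x j = 1), g x := by
    unfold anfCoeff
    congr 1
    apply Finset.filter_congr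
    intro x _
    constructor
    · intro h hxj
      exact ((hj j).mp (h j hxj)) rfl
    · intro h k hk
      rw [hj k]
      rintro rfl
      exact h hk
  rw [h1, h2, ← Finset.sum_filter_add_sum_filter_not Finset.univ (fun x : V n => x j = 1) g]
  set A := ∑ x ∈ Finset.univ.filter (fun x : V n => x j = 1), g x
  set B := ∑ x ∈ Finset.univ.filter (fun x : V n => ¬ x j = 1), g x
  linear_combination - z2 A

end S9

theorem stmt9 {n : ℕ} (hn : Even n) (h4 : 4 ≤ n) (F Φ : V n → V n) (φ : V n → ZMod 2)
    (hq : IsQuadratic F) (hAPN : IsAPN F) (hspec : PhiSpec F Φ φ) :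
    ∀ i : Fin n, ∃ (f : V n → ZMod 2) (lam : ZMod 2),
      degB f ≤ n - 2 ∧
      ∀ x : V n, Φ x i =
        f x + lam * ∑ a ∈ Finset.univ.filter (fun a : V n => n - 1 ≤ wt a), mono a x := by
  intro i
  have hq1 := hq.1
  refine ⟨fun x => Φ x i + anfCoeff (fun x => Φ x i) (fun _ => 1)
      * ∑ a ∈ Finset.univ.filter (fun a : V n => n - 1 ≤ wt a), mono a x,
    anfCoeff (fun x => Φ x i) (fun _ => 1), ?_, ?_⟩
  · apply Finset.sup_le
    intro c hcmem
    rw [Finset.mem_filter] at hcmem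
    by_contra hgt
    push_neg at hgt
    have hwt1 : n - 1 ≤ wt c := by omega
    apply hcmem.2
    have hM : anfCoeff (fun x => ∑ a ∈ Finset.univ.filter (fun a : V n => n - 1 ≤ wt a),
        mono a x) c = 1 := by
      rw [S9.anfCoeff_sumf, Finset.sum_congr rfl (fun b _ => S9.anfCoeff_mono b c),
        Finset.sum_ite_eq' (Finset.univ.filter (fun a : V n => n - 1 ≤ wt a)) c
          (fun _ => (1 : ZMod 2))]
      exact if_pos (show c ∈ Finset.univ.filter (fun a : V n => n - 1 ≤ wt a) from
        Finset.mem_filter.mpr ⟨Finset.mem_univ _, hwt1⟩)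
    rw [S9.anfCoeff_addf, S9.anfCoeff_smulf, hM, mul_one]
    have hwtle : wt c ≤ n := S9.wt_le c
    rcases Nat.lt_or_ge (wt c) n with hlt | hge
    · have hc : wt c = n - 1 := by omega
      obtain ⟨j, hj⟩ := S9.exists_j_of_wt hc (by omega)
      rw [S9.anf_step (fun x => Φ x i) hj]
      have hT : ∑ x ∈ Finset.univ.filter (fun x : V n => x j = 1), Φ x i = 0 := by
        have h := S9.sum_xj_phi hn hq1 hspec i j
        rw [← h, Finset.sum_filter]
        refine Finset.sum_congr rfl fun x _ => ?_
        rcases S9.two_cases (x j) with h0 | h1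
        · rw [h0, if_neg (show ¬ ((0 : ZMod 2) = 1) by decide), zero_mul]
        · rw [h1, if_pos rfl, one_mul]
      rw [hT, add_zero, S9.z2]
    · have hc : c = (fun _ => 1) := funext (S9.eq_ones_of_wt (by omega))
      rw [hc, S9.z2]
  · intro x
    show Φ x i = Φ x i + _ * _ + _ * _
    rw [add_assoc, S9.z2, add_zero]
end

section
/- Let n ≥ 5 be odd and let g: 𝔽₂ⁿ → 𝔽₂ be a Boolean function with |{x : g(x) = 0}| = 2^{n−1}. If there exist distinct coordinates i, j such that |{x : g(x)=0, x_i=0, x_j=0}| is odd, then the coefficient in the algebraic normal form of g at the monomial ∏_{k ≠ i,j} x_k (of degree n−2) is 1; in particular deg(g) ≥ n−2. -/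
open Finset

lemma zmod2_cases_s19 (z : ZMod 2) : z = 0 ∨ z = 1 := by revert z; decide

lemma even_cardS {n : ℕ} (h5 : 5 ≤ n) (i j : Fin n) :
    Even (Finset.univ.filter (fun x : V n => x i = 0 ∧ x j = 0)).card := by
  classical
  obtain ⟨k, hki, hkj⟩ : ∃ k : Fin n, k ≠ i ∧ k ≠ j := by
    have hcc : (({i, j} : Finset (Fin n))ᶜ).Nonempty := by
      rw [← Finset.card_pos, Finset.card_compl]
      have h2 : ({i, j} : Finset (Fin n)).card ≤ 2 := Finset.card_insert_le _ _ |>.trans (by simp)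
      simp only [Fintype.card_fin]
      omega
    obtain ⟨k, hk⟩ := hcc
    simp only [Finset.mem_compl, Finset.mem_insert, Finset.mem_singleton, not_or] at hk
    exact ⟨k, hk.1, hk.2⟩
  set S := Finset.univ.filter (fun x : V n => x i = 0 ∧ x j = 0) with hS
  have hsplit : S = S.filter (fun x => x k = 0) ∪ S.filter (fun x => ¬ (x k = 0)) :=
    (Finset.filter_union_filter_not_eq _ S).symm
  have hdisj : Disjoint (S.filter (fun x => x k = 0)) (S.filter (fun x => ¬ (x k = 0))) :=
    Finset.disjoint_filter_filter_not _ _ _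
  set σ : V n → V n := fun x l => if l = k then x l + 1 else x l with hσ
  have hσσ : ∀ x, σ (σ x) = x := by
    intro x; funext l; simp only [hσ]
    by_cases h : l = k <;> simp [h]
    · ring_nf; simp [show ((2:ZMod 2)) = 0 from rfl]
  have hσi : ∀ x, σ x i = x i := by intro x; simp [hσ, (Ne.symm hki)]
  have hσj : ∀ x, σ x j = x j := by intro x; simp [hσ, (Ne.symm hkj)]
  have hσk : ∀ x : V n, σ x k = x k + 1 := by intro x; simp [hσ]
  have hmem : ∀ x : V n, x ∈ S.filter (fun x => x k = 0) → σ x ∈ S.filter (fun x => ¬ (x k = 0)) := by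
    intro x hx
    simp only [hS, Finset.mem_filter, Finset.mem_univ, true_and] at hx ⊢
    refine ⟨⟨by rw [hσi]; exact hx.1.1, by rw [hσj]; exact hx.1.2⟩, ?_⟩
    rw [hσk, hx.2]; decide
  have hmem' : ∀ x : V n, x ∈ S.filter (fun x => ¬ (x k = 0)) → σ x ∈ S.filter (fun x => x k = 0) := by
    intro x hx
    simp only [hS, Finset.mem_filter, Finset.mem_univ, true_and] at hx ⊢
    refine ⟨⟨by rw [hσi]; exact hx.1.1, by rw [hσj]; exact hx.1.2⟩, ?_⟩
    rcases zmod2_cases_s19 (x k) with h | h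
    · exact absurd h hx.2
    · rw [hσk, h]; decide
  have hcards : (S.filter (fun x => x k = 0)).card = (S.filter (fun x => ¬ (x k = 0))).card := by
    apply Finset.card_bij' (fun x _ => σ x) (fun x _ => σ x)
    · intro x hx; exact hmem x hx
    · intro x hx; exact hmem' x hx
    · intro x _; exact hσσ x
    · intro x _; exact hσσ x
  rw [hsplit, Finset.card_union_of_disjoint hdisj, ← hcards]
  exact Even.add_self _

theorem stmt19 {n : ℕ} (hn : Odd n) (h5 : 5 ≤ n) (g : V n → ZMod 2)
    (hcard : (Finset.univ.filter (fun x : V n => g x = 0)).card = 2 ^ (n - 1))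
    (i j : Fin n) (hij : i ≠ j)
    (hodd : Odd (Finset.univ.filter
      (fun x : V n => g x = 0 ∧ x i = 0 ∧ x j = 0)).card) :
    anfCoeff g (fun l => if l = i ∨ l = j then 0 else 1) = 1 ∧ n - 2 ≤ degB g := by
  classical
  set a : V n := fun l => if l = i ∨ l = j then 0 else 1 with ha
  set S := Finset.univ.filter (fun x : V n => x i = 0 ∧ x j = 0) with hS
  have hT : Finset.univ.filter (fun x : V n => ∀ l, x l = 1 → a l = 1) = S := by
    ext x
    simp only [hS, Finset.mem_filter, Finset.mem_univ, true_and]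
    constructor
    · intro h
      constructor
      · rcases zmod2_cases_s19 (x i) with hh | hh
        · exact hh
        · have := h i hh; simp [ha] at this
      · rcases zmod2_cases_s19 (x j) with hh | hh
        · exact hh
        · have := h j hh; simp [ha] at this
    · rintro ⟨h1, h2⟩ l hl
      have hli : l ≠ i := by rintro rfl; rw [h1] at hl; exact absurd hl (by decide)
      have hlj : l ≠ j := by rintro rfl; rw [h2] at hl; exact absurd hl (by decide)
      simp [ha, hli, hlj]
  set A := S.filter (fun x => g x = 1) with hA
  set B := S.filter (fun x => g x = 0) with hB
  have hBeq : B = Finset.univ.filter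
      (fun x : V n => g x = 0 ∧ x i = 0 ∧ x j = 0) := by
    simp only [hB, hS, Finset.filter_filter]
    apply Finset.filter_congr; intro x _; tauto
  have hBodd : Odd B.card := by rw [hBeq]; exact hodd
  have hSeven : Even S.card := even_cardS h5 i j
  have hABS : A.card + B.card = S.card := by
    rw [← Finset.card_union_of_disjoint]
    · congr 1
      ext x
      simp only [hA, hB, Finset.mem_union, Finset.mem_filter]
      rcases zmod2_cases_s19 (g x) with h | h <;> simp [h]
    · rw [Finset.disjoint_left]
      intro x hx hx'
      simp only [hA, hB, Finset.mem_filter] at hx hx'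
      rw [hx.2] at hx'; exact absurd hx'.2 (by decide)
  have hAodd : Odd A.card := by
    obtain ⟨m, hm⟩ := hSeven; obtain ⟨p, hp⟩ := hBodd
    exact ⟨m - p - 1, by omega⟩
  have hcoef : anfCoeff g a = 1 := by
    rw [anfCoeff, hT]
    have : ∀ x ∈ S, g x = if g x = 1 then (1 : ZMod 2) else 0 := by
      intro x _; rcases zmod2_cases_s19 (g x) with h | h <;> simp [h]
    rw [Finset.sum_congr rfl this, Finset.sum_boole, ← hA]
    obtain ⟨m, hm⟩ := hAodd
    rw [hm]; push_cast
    ring_nf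
    simp [show ((2:ZMod 2)) = 0 from rfl]
  refine ⟨hcoef, ?_⟩
  have hmem : a ∈ Finset.univ.filter (fun b : V n => anfCoeff g b ≠ 0) := by
    simp only [Finset.mem_filter, Finset.mem_univ, true_and, hcoef]
    decide
  have hle := Finset.le_sup (f := wt) hmem
  have hwt : wt a = n - 2 := by
    have hfe : Finset.univ.filter (fun l => a l = 1) = ({i, j} : Finset (Fin n))ᶜ := by
      ext l
      simp only [Finset.mem_filter, Finset.mem_univ, true_and, Finset.mem_compl,
        Finset.mem_insert, Finset.mem_singleton, ha]
      by_cases h : l = i ∨ l = j <;> simp [h]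
    rw [wt, hfe, Finset.card_compl, Finset.card_pair hij, Fintype.card_fin]
  rw [degB, ← hwt]
  exact hle
end
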